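/- Let P be a graph with path metric, φ : P → ℝ^d a (λ, c)-quasi-isometric embedding into Euclidean space, and (y_n)_{n∈ℕ} a sequence of reals with 1 ≤ y_n ≤ L for all n. Then the map Φ : H_P → ℝ^d × ℝ_{>0} ≅ ℍ^{d+1} defined by Φ(x, n) = (φ(x), y_n·2^n) is a quasi-isometric embedding of the combinatorial horoball into hyperbolic (d+1)-space, with constants depending only on λ, c, L and d. -/

import Mathlib

open SimpleGraph

/-- The Groves–Manning combinatorial horoball over a graph `G`: vertex set `V × ℕ`,
horizontal edges between `(x, m)` and `(y, m)` whenever `dist x y ≤ 2 ^ m`, and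
vertical edges between `(x, m)` and `(x, m + 1)`. -/
def Horoball {V : Type*} (G : SimpleGraph V) : SimpleGraph (V × ℕ) where
  Adj p q :=
    (p.2 = q.2 ∧ p.1 ≠ q.1 ∧ G.dist p.1 q.1 ≤ 2 ^ p.2) ∨
    (p.1 = q.1 ∧ (p.2 = q.2 + 1 ∨ q.2 = p.2 + 1))
  symm := by
    constructor
    rintro ⟨x, m⟩ ⟨y, n⟩ (⟨h1, h2, h3⟩ | ⟨h1, h2⟩)
    · exact Or.inl ⟨h1.symm, h2.symm, by simp only at h1 h3 ⊢; rw [SimpleGraph.dist_comm, ← h1]; exact h3⟩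
    · exact Or.inr ⟨h1.symm, h2.symm⟩
  loopless := by
    constructor
    rintro ⟨x, m⟩ (⟨_, h, _⟩ | ⟨_, h | h⟩)
    · exact h rfl
    · omega
    · omega

/-- The inverse hyperbolic cosine, `arcosh t = log (t + √(t² - 1))`. -/
noncomputable def arcosh (t : ℝ) : ℝ := Real.log (t + Real.sqrt (t ^ 2 - 1))

/-- The hyperbolic distance in the upper half-space model `ℝ^d × ℝ_{>0} ≅ ℍ^{d+1}`. -/
noncomputable def hypDist {d : ℕ} (z z' : EuclideanSpace ℝ (Fin d)) (y y' : ℝ) : ℝ :=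
  arcosh (1 + (‖z - z'‖ ^ 2 + (y - y') ^ 2) / (2 * y * y'))


lemma arcosh_pos_arg {t : ℝ} (ht : 1 ≤ t) : 0 < t + Real.sqrt (t ^ 2 - 1) := by
  have := Real.sqrt_nonneg (t ^ 2 - 1); linarith

lemma arcosh_nonneg {t : ℝ} (ht : 1 ≤ t) : 0 ≤ arcosh t := by
  have := Real.sqrt_nonneg (t ^ 2 - 1)
  exact Real.log_nonneg (by linarith)

lemma log_le_arcosh {t : ℝ} (ht : 1 ≤ t) : Real.log t ≤ arcosh t := by
  have := Real.sqrt_nonneg (t ^ 2 - 1)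
  exact Real.log_le_log (by linarith) (by linarith)

lemma arcosh_le {t : ℝ} (ht : 1 ≤ t) : arcosh t ≤ Real.log 2 + Real.log t := by
  have h1 : Real.sqrt (t ^ 2 - 1) ≤ t := by
    calc Real.sqrt (t ^ 2 - 1) ≤ Real.sqrt (t ^ 2) := Real.sqrt_le_sqrt (by linarith)
    _ = t := by rw [Real.sqrt_sq (by linarith)]
  rw [← Real.log_mul (by norm_num) (by linarith)]
  exact Real.log_le_log (arcosh_pos_arg ht) (by linarith)

lemma arcosh_mono {s t : ℝ} (hs : 1 ≤ s) (hst : s ≤ t) : arcosh s ≤ arcosh t := by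
  apply Real.log_le_log (arcosh_pos_arg hs)
  have : Real.sqrt (s ^ 2 - 1) ≤ Real.sqrt (t ^ 2 - 1) :=
    Real.sqrt_le_sqrt (by nlinarith)
  linarith

lemma arcosh_cosh_exp {x : ℝ} (hx : 0 ≤ x) :
    arcosh ((Real.exp x + Real.exp (-x)) / 2) = x := by
  have h1 : Real.exp (-x) ≤ Real.exp x := Real.exp_le_exp.mpr (by linarith)
  have h2 : 0 < Real.exp (-x) := Real.exp_pos _
  have h3 : ((Real.exp x + Real.exp (-x)) / 2) ^ 2 - 1
      = ((Real.exp x - Real.exp (-x)) / 2) ^ 2 := by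
    have : Real.exp x * Real.exp (-x) = 1 := by
      rw [← Real.exp_add]; simp
    ring_nf
    nlinarith [this]
  unfold arcosh
  rw [h3, Real.sqrt_sq (by linarith)]
  have : (Real.exp x + Real.exp (-x)) / 2 + (Real.exp x - Real.exp (-x)) / 2 = Real.exp x := by ring
  rw [this, Real.log_exp]

section realbounds
variable {r Y Y' : ℝ}

lemma cosh_form (hY : 0 < Y) (hY' : 0 < Y') :
    1 + (Y - Y') ^ 2 / (2 * Y * Y')
      = (Real.exp |Real.log (Y / Y')| + Real.exp (-|Real.log (Y / Y')|)) / 2 := by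
  have key : ∀ x : ℝ, (Real.exp |x| + Real.exp (-|x|)) / 2 = (Real.exp x + Real.exp (-x)) / 2 := by
    intro x
    rcases abs_cases x with ⟨h, _⟩ | ⟨h, _⟩ <;> rw [h] <;> ring_nf
  rw [key, Real.exp_neg, Real.exp_log (div_pos hY hY')]
  field_simp
  ring

lemma one_le_cosh_form (hY : 0 < Y) (hY' : 0 < Y') :
    1 ≤ 1 + (Y - Y') ^ 2 / (2 * Y * Y') := by
  have : (0:ℝ) ≤ (Y - Y') ^ 2 / (2 * Y * Y') := by positivity
  linarith

lemma hyp_lower_vert (hr : 0 ≤ r) (hY : 0 < Y) (hY' : 0 < Y') :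
    |Real.log (Y / Y')| ≤ arcosh (1 + (r ^ 2 + (Y - Y') ^ 2) / (2 * Y * Y')) := by
  have h1 := cosh_form hY hY'
  have h2 : (1 : ℝ) + (Y - Y') ^ 2 / (2 * Y * Y')
      ≤ 1 + (r ^ 2 + (Y - Y') ^ 2) / (2 * Y * Y') := by
    have : (Y - Y') ^ 2 / (2 * Y * Y') ≤ (r ^ 2 + (Y - Y') ^ 2) / (2 * Y * Y') := by
      apply div_le_div_of_nonneg_right ?_ (by positivity) |>.trans_eq rfl
      · nlinarith
    linarith
  calc |Real.log (Y / Y')|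
      = arcosh (1 + (Y - Y') ^ 2 / (2 * Y * Y')) := by
        rw [h1]; exact (arcosh_cosh_exp (abs_nonneg _)).symm
    _ ≤ _ := arcosh_mono (one_le_cosh_form hY hY') h2

lemma hyp_lower_horiz (hr : 0 < r) (hY : 0 < Y) (hY' : 0 < Y') :
    2 * Real.log r - Real.log (2 * Y * Y')
      ≤ arcosh (1 + (r ^ 2 + (Y - Y') ^ 2) / (2 * Y * Y')) := by
  have hA : (1:ℝ) ≤ 1 + (r ^ 2 + (Y - Y') ^ 2) / (2 * Y * Y') := by
    have : (0:ℝ) ≤ (r ^ 2 + (Y - Y') ^ 2) / (2 * Y * Y') := by positivity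
    linarith
  have h1 : Real.log (r ^ 2 / (2 * Y * Y'))
      ≤ Real.log (1 + (r ^ 2 + (Y - Y') ^ 2) / (2 * Y * Y')) := by
    apply Real.log_le_log (by positivity)
    have : r ^ 2 / (2 * Y * Y') ≤ (r ^ 2 + (Y - Y') ^ 2) / (2 * Y * Y') := by
      apply div_le_div_of_nonneg_right ?_ (by positivity) |>.trans_eq rfl
      nlinarith
    linarith
  have h2 : Real.log (r ^ 2 / (2 * Y * Y')) = 2 * Real.log r - Real.log (2 * Y * Y') := by
    rw [Real.log_div (by positivity) (by positivity), Real.log_pow]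
    push_cast; ring
  linarith [log_le_arcosh hA]

lemma hyp_upper (hr : 0 ≤ r) (hY : 0 < Y) (hY' : 0 < Y') (hYY : 1 ≤ Y * Y') :
    arcosh (1 + (r ^ 2 + (Y - Y') ^ 2) / (2 * Y * Y'))
      ≤ 2 * Real.log 2 + |Real.log (Y / Y')|
        + max 0 (2 * Real.log (1 + r) - Real.log (Y * Y')) := by
  set u1 : ℝ := (Y - Y') ^ 2 / (2 * Y * Y') with hu1
  set u2 : ℝ := r ^ 2 / (2 * Y * Y') with hu2
  have hu1n : 0 ≤ u1 := by positivity
  have hu2n : 0 ≤ u2 := by positivity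
  have hsplit : 1 + (r ^ 2 + (Y - Y') ^ 2) / (2 * Y * Y') ≤ (1 + u1) * (1 + u2) := by
    have : (r ^ 2 + (Y - Y') ^ 2) / (2 * Y * Y') = u1 + u2 := by
      rw [hu1, hu2]; ring
    nlinarith
  have hA1 : (1:ℝ) ≤ 1 + (r ^ 2 + (Y - Y') ^ 2) / (2 * Y * Y') := by
    have : (0:ℝ) ≤ (r ^ 2 + (Y - Y') ^ 2) / (2 * Y * Y') := by positivity
    linarith
  have step1 : arcosh (1 + (r ^ 2 + (Y - Y') ^ 2) / (2 * Y * Y'))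
      ≤ Real.log 2 + Real.log (1 + u1) + Real.log (1 + u2) := by
    have := arcosh_le hA1
    have hlog : Real.log (1 + (r ^ 2 + (Y - Y') ^ 2) / (2 * Y * Y'))
        ≤ Real.log ((1 + u1) * (1 + u2)) := Real.log_le_log (by positivity) hsplit
    rw [Real.log_mul (by positivity) (by positivity)] at hlog
    linarith
  have step2 : Real.log (1 + u1) ≤ |Real.log (Y / Y')| := by
    rw [hu1]
    rw [cosh_form hY hY']
    set x := |Real.log (Y / Y')|
    have hx : 0 ≤ x := abs_nonneg _
    have : (Real.exp x + Real.exp (-x)) / 2 ≤ Real.exp x := by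
      have := Real.exp_le_exp.mpr (show -x ≤ x by linarith)
      linarith
    calc Real.log ((Real.exp x + Real.exp (-x)) / 2) ≤ Real.log (Real.exp x) :=
          Real.log_le_log (by positivity) this
      _ = x := Real.log_exp x
  have step3 : Real.log (1 + u2)
      ≤ Real.log 2 + max 0 (2 * Real.log (1 + r) - Real.log (Y * Y')) := by
    rcases le_or_gt ((1 + r) ^ 2) (Y * Y') with hcase | hcase
    · have : 1 + u2 ≤ 2 := by
        rw [hu2]
        have h1 : r ^ 2 ≤ (1 + r) ^ 2 := by nlinarith
        have h2 : r ^ 2 / (2 * Y * Y') ≤ (Y * Y') / (2 * Y * Y') := by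
          apply div_le_div_of_nonneg_right ?_ (by positivity) |>.trans_eq rfl
          linarith
        have h3 : (Y * Y') / (2 * Y * Y') = 1 / 2 := by field_simp
        rw [h3] at h2; linarith
      have h4 : Real.log (1 + u2) ≤ Real.log 2 := Real.log_le_log (by positivity) this
      have h5 := le_max_left (0:ℝ) (2 * Real.log (1 + r) - Real.log (Y * Y'))
      linarith
    · have hb : 1 + u2 ≤ 2 * ((1 + r) ^ 2 / (Y * Y')) := by
        rw [hu2]
        have h1 : (1:ℝ) ≤ (1 + r) ^ 2 / (Y * Y') := by
          rw [le_div_iff₀ (by positivity)]; linarith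
        have h2 : r ^ 2 / (2 * Y * Y') ≤ (1 + r) ^ 2 / (Y * Y') := by
          rw [div_le_div_iff₀ (by positivity) (by positivity)]
          nlinarith
        linarith
      have hlog : Real.log (1 + u2) ≤ Real.log (2 * ((1 + r) ^ 2 / (Y * Y'))) :=
        Real.log_le_log (by positivity) hb
      rw [Real.log_mul (by norm_num) (by positivity),
        Real.log_div (by positivity) (by positivity), Real.log_pow] at hlog
      have : (2:ℝ) * Real.log (1 + r) - Real.log (Y * Y')
          ≤ max 0 (2 * Real.log (1 + r) - Real.log (Y * Y')) := le_max_right _ _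
      push_cast at hlog
      linarith
  linarith

end realbounds

section walks
variable {V : Type} {G : SimpleGraph V}

lemma horoball_adj_cases {p q : V × ℕ} (h : (Horoball G).Adj p q) :
    (p.2 = q.2 ∧ p.1 ≠ q.1 ∧ G.dist p.1 q.1 ≤ 2 ^ p.2) ∨
    (p.1 = q.1 ∧ (p.2 = q.2 + 1 ∨ q.2 = p.2 + 1)) := h

lemma horoball_level_le {p q : V × ℕ} (w : (Horoball G).Walk p q) :
    p.2 ≤ q.2 + w.length ∧ q.2 ≤ p.2 + w.length := by
  induction w with
  | nil => simp
  | cons h w ih =>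
    rename_i u v x
    rcases horoball_adj_cases h with ⟨h1, -⟩ | ⟨-, h1 | h1⟩ <;>
      simp only [Walk.length_cons] <;> omega

lemma horoball_dist_fst (hG : G.Connected) {p q : V × ℕ} (w : (Horoball G).Walk p q) :
    G.dist p.1 q.1 ≤ w.length * 2 ^ p.2 * 2 ^ w.length := by
  induction w with
  | nil => simp
  | cons h w ih =>
    rename_i u v x
    have htri : G.dist u.1 x.1 ≤ G.dist u.1 v.1 + G.dist v.1 x.1 := hG.dist_triangle
    have hstep : G.dist u.1 v.1 ≤ 2 ^ u.2 ∧ v.2 ≤ u.2 + 1 := by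
      rcases horoball_adj_cases h with ⟨h1, -, h3⟩ | ⟨h1, h2⟩
      · exact ⟨h3, by omega⟩
      · rw [h1]; simp [SimpleGraph.dist_self]; omega
    have h3 : w.length * 2 ^ v.2 * 2 ^ w.length
        ≤ w.length * 2 ^ (u.2+1) * 2 ^ w.length := by
      have := Nat.pow_le_pow_right (show 1 ≤ 2 by norm_num) hstep.2
      exact Nat.mul_le_mul_right _ (Nat.mul_le_mul_left _ this)
    have key : 2 ^ u.2 + w.length * 2 ^ (u.2+1) * 2 ^ w.length
        ≤ (w.length+1) * 2 ^ u.2 * 2 ^ (w.length+1) := by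
      have h1l : 1 ≤ 2 ^ (w.length+1) := Nat.one_le_two_pow
      calc 2 ^ u.2 + w.length * 2 ^ (u.2+1) * 2 ^ w.length
          = 2 ^ u.2 * 1 + w.length * 2 ^ u.2 * 2 ^ (w.length+1) := by ring
        _ ≤ 2 ^ u.2 * 2 ^ (w.length+1) + w.length * 2 ^ u.2 * 2 ^ (w.length+1) :=
            Nat.add_le_add_right (Nat.mul_le_mul_left _ h1l) _
        _ = (w.length+1) * 2 ^ u.2 * 2 ^ (w.length+1) := by ring
    simp only [Walk.length_cons]
    calc G.dist u.1 x.1 ≤ G.dist u.1 v.1 + G.dist v.1 x.1 := htri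
      _ ≤ 2 ^ u.2 + w.length * 2 ^ (u.2+1) * 2 ^ w.length :=
          Nat.add_le_add hstep.1 (le_trans ih h3)
      _ ≤ _ := key

/-- going up `j` levels -/
def walkUp (a : V) (m : ℕ) : (j : ℕ) → (Horoball G).Walk (a, m) (a, m + j)
  | 0 => Walk.nil
  | j+1 => Walk.concat (walkUp a m j) (Or.inr ⟨rfl, Or.inr rfl⟩)

lemma length_walkUp (a : V) (m j : ℕ) : (walkUp (G := G) a m j).length = j := by
  induction j with
  | zero => rfl
  | succ j ih => rw [walkUp]; exact (Walk.length_concat _ _).trans (congrArg (· + 1) ih)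

def walkUpTo (a : V) {m k : ℕ} (h : m ≤ k) : (Horoball G).Walk (a, m) (a, k) :=
  (walkUp a m (k - m)).copy rfl (by rw [Nat.add_sub_cancel' h])

lemma length_walkUpTo (a : V) {m k : ℕ} (h : m ≤ k) :
    (walkUpTo (G := G) a h).length = k - m := by
  rw [walkUpTo, Walk.length_copy, length_walkUp]

lemma horoball_dist_le (a b : V) (m n k : ℕ) (hm : m ≤ k) (hn : n ≤ k)
    (hd : G.dist a b ≤ 2 ^ k) :
    (Horoball G).Reachable (a, m) (b, n) ∧
      (Horoball G).dist (a, m) (b, n) ≤ (k - m) + (k - n) + 1 := by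
  by_cases hab : a = b
  · subst hab
    have hlen : ((walkUpTo (G := G) a hm).append (walkUpTo a hn).reverse).length
        = (k - m) + (k - n) := by
      simp [Walk.length_append, Walk.length_reverse, length_walkUpTo]
    refine ⟨⟨(walkUpTo (G := G) a hm).append (walkUpTo a hn).reverse⟩, ?_⟩
    have := SimpleGraph.dist_le ((walkUpTo (G := G) a hm).append (walkUpTo a hn).reverse)
    omega
  · have hadj : (Horoball G).Adj (a, k) (b, k) := Or.inl ⟨rfl, hab, hd⟩
    have hlen : ((walkUpTo (G := G) a hm).append
          (Walk.cons hadj (walkUpTo b hn).reverse)).length = (k - m) + ((k - n) + 1) := by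
      simp [Walk.length_append, Walk.length_cons, Walk.length_reverse, length_walkUpTo]
    refine ⟨⟨(walkUpTo (G := G) a hm).append (Walk.cons hadj (walkUpTo b hn).reverse)⟩, ?_⟩
    have := SimpleGraph.dist_le ((walkUpTo (G := G) a hm).append
      (Walk.cons hadj (walkUpTo b hn).reverse))
    omega

end walks

set_option maxHeartbeats 1000000 in
/-- If `φ : P → ℝ^d` is a `(λ, c)`-quasi-isometric embedding of a connected graph into
Euclidean space and `1 ≤ y_n ≤ L`, then `Φ(x, n) = (φ x, y_n · 2^n)` is a
quasi-isometric embedding of the combinatorial horoball into hyperbolic `(d+1)`-space,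
with constants depending only on `λ`, `c`, `L` and `d`. -/
theorem horoball_to_hyperbolic_qie (lam c L : ℝ) (d : ℕ)
    (hlam : 1 ≤ lam) (hc : 0 ≤ c) (hL : 1 ≤ L) :
    ∃ lam' c' : ℝ, 1 ≤ lam' ∧ 0 ≤ c' ∧
      ∀ (V : Type) (G : SimpleGraph V), G.Connected →
        ∀ (φ : V → EuclideanSpace ℝ (Fin d)) (y : ℕ → ℝ),
          (∀ n : ℕ, 1 ≤ y n ∧ y n ≤ L) →
          (∀ a b : V,
            (1 / lam) * (G.dist a b : ℝ) - c ≤ dist (φ a) (φ b) ∧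
            dist (φ a) (φ b) ≤ lam * (G.dist a b : ℝ) + c) →
          ∀ (a b : V) (m n : ℕ),
            (1 / lam') * ((Horoball G).dist (a, m) (b, n) : ℝ) - c' ≤
              hypDist (φ a) (φ b) (y m * 2 ^ m) (y n * 2 ^ n) ∧
            hypDist (φ a) (φ b) (y m * 2 ^ m) (y n * 2 ^ n) ≤
              lam' * ((Horoball G).dist (a, m) (b, n) : ℝ) + c' := by
  refine ⟨7, 10 * Real.log (2 + lam + c + L), by norm_num,
    by have := Real.log_nonneg (show (1:ℝ) ≤ 2 + lam + c + L by linarith); linarith, ?_⟩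
  intro V G hG φ y hy hφ a b m n
  obtain ⟨Λ, hΛdef⟩ : ∃ x : ℝ, Real.log (2 + lam + c + L) = x := ⟨_, rfl⟩
  rw [hΛdef]
  have hbase : (4 : ℝ) ≤ 2 + lam + c + L := by linarith
  have hΛ2 : Real.log 2 ≤ Λ := hΛdef ▸ Real.log_le_log (by norm_num) (by linarith)
  have hΛL : Real.log L ≤ Λ := hΛdef ▸ Real.log_le_log (by linarith) (by linarith)
  have hΛlc : Real.log (1 + c + lam) ≤ Λ := hΛdef ▸ Real.log_le_log (by linarith) (by linarith)
  have hΛlam : Real.log lam ≤ Λ := hΛdef ▸ Real.log_le_log (by linarith) (by linarith)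
  have hΛc : Real.log (1 + c) ≤ Λ := hΛdef ▸ Real.log_le_log (by linarith) (by linarith)
  have hlog2pos : (0:ℝ) < Real.log 2 := Real.log_pos (by norm_num)
  have hΛpos : 0 < Λ := lt_of_lt_of_le hlog2pos hΛ2
  have hlog2le1 : Real.log 2 ≤ 1 := by
    have := Real.log_le_sub_one_of_pos (show (0:ℝ) < 2 by norm_num); linarith
  have hlog2ge : (1:ℝ)/7 ≤ Real.log 2 := by
    have := Real.log_two_gt_d9; norm_num at this ⊢; linarith
  -- opaque names
  obtain ⟨δn, hδn⟩ : ∃ x : ℕ, G.dist a b = x := ⟨_, rfl⟩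
  obtain ⟨Dn, hDn⟩ : ∃ x : ℕ, (Horoball G).dist (a, m) (b, n) = x := ⟨_, rfl⟩
  rw [hDn]
  obtain ⟨r, hrdef⟩ : ∃ x : ℝ, dist (φ a) (φ b) = x := ⟨_, rfl⟩
  obtain ⟨Y, hYdef⟩ : ∃ x : ℝ, y m * 2 ^ m = x := ⟨_, rfl⟩
  obtain ⟨Y', hY'def⟩ : ∃ x : ℝ, y n * 2 ^ n = x := ⟨_, rfl⟩
  rw [hYdef, hY'def]
  have hρeq : hypDist (φ a) (φ b) Y Y'
      = arcosh (1 + (r ^ 2 + (Y - Y') ^ 2) / (2 * Y * Y')) := by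
    rw [hypDist, ← dist_eq_norm, hrdef]
  rw [hρeq]
  obtain ⟨ρ, hρdef⟩ : ∃ x : ℝ,
      arcosh (1 + (r ^ 2 + (Y - Y') ^ 2) / (2 * Y * Y')) = x := ⟨_, rfl⟩
  rw [hρdef]
  obtain ⟨l2, hl2def⟩ : ∃ x : ℝ, Real.log 2 = x := ⟨_, rfl⟩
  rw [hl2def] at hlog2pos hlog2le1 hlog2ge hΛ2
  -- basic positivity
  have hym := hy m
  have hyn := hy n
  have h2m : (1:ℝ) ≤ 2 ^ m := one_le_pow₀ (by norm_num)
  have h2n : (1:ℝ) ≤ 2 ^ n := one_le_pow₀ (by norm_num)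
  have hY1 : 1 ≤ Y := by
    rw [← hYdef]
    have := mul_le_mul hym.1 h2m (by norm_num) (by linarith [hym.1])
    linarith
  have hY'1 : 1 ≤ Y' := by
    rw [← hY'def]
    have := mul_le_mul hyn.1 h2n (by norm_num) (by linarith [hyn.1])
    linarith
  have hY : 0 < Y := by linarith
  have hY' : 0 < Y' := by linarith
  have hYY1 : 1 ≤ Y * Y' := by
    have := mul_le_mul hY1 hY'1 (by norm_num) (by linarith)
    linarith
  have hr0 : 0 ≤ r := hrdef ▸ dist_nonneg
  have hDnn : (0:ℝ) ≤ (Dn:ℝ) := Nat.cast_nonneg _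
  have hδnn : (0:ℝ) ≤ (δn:ℝ) := Nat.cast_nonneg _
  have hmnn : (0:ℝ) ≤ (m:ℝ) := Nat.cast_nonneg _
  have hnnn : (0:ℝ) ≤ (n:ℝ) := Nat.cast_nonneg _
  have hDl2nn : (0:ℝ) ≤ (Dn:ℝ) * l2 := mul_nonneg hDnn hlog2pos.le
  have hml2nn : (0:ℝ) ≤ (m:ℝ) * l2 := mul_nonneg hmnn hlog2pos.le
  have hnl2nn : (0:ℝ) ≤ (n:ℝ) * l2 := mul_nonneg hnnn hlog2pos.le
  -- logs of Y, Y'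
  have hlym : 0 ≤ Real.log (y m) ∧ Real.log (y m) ≤ Real.log L :=
    ⟨Real.log_nonneg hym.1, Real.log_le_log (by linarith [hym.1]) hym.2⟩
  have hlyn : 0 ≤ Real.log (y n) ∧ Real.log (y n) ≤ Real.log L :=
    ⟨Real.log_nonneg hyn.1, Real.log_le_log (by linarith [hyn.1]) hyn.2⟩
  have hlogY : Real.log Y = Real.log (y m) + m * l2 := by
    rw [← hYdef, Real.log_mul (ne_of_gt (by linarith [hym.1] : (0:ℝ) < y m))
      (by positivity : ((2:ℝ) ^ m) ≠ 0), Real.log_pow, hl2def]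
  have hlogY' : Real.log Y' = Real.log (y n) + n * l2 := by
    rw [← hY'def, Real.log_mul (ne_of_gt (by linarith [hyn.1] : (0:ℝ) < y n))
      (by positivity : ((2:ℝ) ^ n) ≠ 0), Real.log_pow, hl2def]
  have hlogdiv : Real.log (Y / Y')
      = ((m:ℝ) - n) * l2 + (Real.log (y m) - Real.log (y n)) := by
    rw [Real.log_div (ne_of_gt hY) (ne_of_gt hY'), hlogY, hlogY']; ring
  have hLnn : 0 ≤ Real.log L := Real.log_nonneg hL
  have hyabs : |Real.log (y m) - Real.log (y n)| ≤ Real.log L := by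
    rw [abs_sub_le_iff]; constructor <;> linarith [hlym.1, hlym.2, hlyn.1, hlyn.2]
  have F1a : |Real.log (Y / Y')| ≤ |(m:ℝ) - n| * l2 + Real.log L := by
    rw [hlogdiv]
    calc |((m:ℝ) - n) * l2 + (Real.log (y m) - Real.log (y n))|
        ≤ |((m:ℝ) - n) * l2| + |Real.log (y m) - Real.log (y n)| := abs_add_le _ _
      _ ≤ |(m:ℝ) - n| * l2 + Real.log L := by
          rw [abs_mul, abs_of_nonneg hlog2pos.le]; linarith
  have F1b : |(m:ℝ) - n| * l2 - Real.log L ≤ |Real.log (Y / Y')| := by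
    have h1 : |((m:ℝ) - n) * l2|
        ≤ |Real.log (Y / Y')| + |Real.log (y m) - Real.log (y n)| := by
      have h0 := abs_add_le (Real.log (Y / Y')) (-(Real.log (y m) - Real.log (y n)))
      have heq : Real.log (Y / Y') + -(Real.log (y m) - Real.log (y n))
          = ((m:ℝ) - n) * l2 := by rw [hlogdiv]; ring
      rw [heq, abs_neg] at h0
      exact h0
    rw [abs_mul, abs_of_nonneg hlog2pos.le] at h1
    linarith
  -- combinatorial facts
  obtain ⟨s, hsdef⟩ : ∃ x : ℕ, Nat.clog 2 δn = x := ⟨_, rfl⟩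
  obtain ⟨k, hkdef⟩ : ∃ x : ℕ, max (max m n) s = x := ⟨_, rfl⟩
  have hmk : m ≤ k := by omega
  have hnk : n ≤ k := by omega
  have hδ2k : δn ≤ 2 ^ k := by
    calc δn ≤ 2 ^ Nat.clog 2 δn := Nat.le_pow_clog (by norm_num) δn
      _ ≤ 2 ^ k := Nat.pow_le_pow_right (by norm_num) (by omega)
  obtain ⟨hreach, hDle⟩ := horoball_dist_le a b m n k hmk hnk (hδn ▸ hδ2k)
  rw [hDn] at hDle
  obtain ⟨w, hw⟩ := hreach.exists_walk_length_eq_dist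
  rw [hDn] at hw
  have hW1 : m ≤ n + Dn ∧ n ≤ m + Dn := by
    have := horoball_level_le w; rw [hw] at this; exact this
  have hW2 : δn ≤ Dn * 2 ^ m * 2 ^ Dn := by
    have := horoball_dist_fst hG w; rw [hw, hδn] at this; exact this
  have hmnD : |(m:ℝ) - n| ≤ (Dn : ℝ) := by
    rw [abs_sub_le_iff]
    have h1 : (m:ℝ) ≤ (n:ℝ) + Dn := by exact_mod_cast hW1.1
    have h2 : (n:ℝ) ≤ (m:ℝ) + Dn := by exact_mod_cast hW1.2
    constructor <;> linarith
  have habs2 : |(m:ℝ) - n| * l2 ≤ (Dn:ℝ) * l2 :=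
    mul_le_mul_of_nonneg_right hmnD hlog2pos.le
  have hDl2 : (Dn:ℝ) * l2 ≤ (Dn:ℝ) := by
    have := mul_le_mul_of_nonneg_left hlog2le1 hDnn
    simpa using this
  -- QI facts
  have hφab := hφ a b
  rw [hδn, hrdef] at hφab
  have hδlam : (δn:ℝ) ≤ lam * r + lam * c := by
    have hlam0 : (0:ℝ) < lam := by linarith
    have h2 : (1 / lam) * (δn:ℝ) ≤ r + c := by linarith [hφab.1]
    have h3 := mul_le_mul_of_nonneg_left h2 hlam0.le
    have h4 : lam * ((1 / lam) * (δn:ℝ)) = (δn:ℝ) := by field_simp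
    rw [h4] at h3; linarith
  have h1r : Real.log (1 + r) ≤ Λ + Real.log (1 + (δn:ℝ)) := by
    have hcδ : 0 ≤ c * (δn:ℝ) := mul_nonneg hc hδnn
    have hlδ : lam * (δn:ℝ) ≤ lam * (δn:ℝ) := le_refl _
    have h2 : 1 + r ≤ (1 + c + lam) * (1 + (δn:ℝ)) := by
      have hrb := hφab.2
      have hexp : (1 + c + lam) * (1 + (δn:ℝ))
          = 1 + (δn:ℝ) + c + c * (δn:ℝ) + lam + lam * (δn:ℝ) := by ring
      linarith
    calc Real.log (1 + r) ≤ Real.log ((1 + c + lam) * (1 + (δn:ℝ))) :=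
        Real.log_le_log (by linarith) h2
      _ = Real.log (1 + c + lam) + Real.log (1 + (δn:ℝ)) :=
        Real.log_mul (by positivity) (by positivity)
      _ ≤ Λ + Real.log (1 + (δn:ℝ)) := by linarith
  have hlogYY : (m:ℝ) * l2 + (n:ℝ) * l2 ≤ Real.log (Y * Y') := by
    rw [Real.log_mul (ne_of_gt hY) (ne_of_gt hY'), hlogY, hlogY']
    linarith [hlym.1, hlyn.1]
  have hupper := hyp_upper hr0 hY hY' hYY1
  rw [hρdef, hl2def] at hupper
  constructor
  · -- LOWER bound
    have hρ0 : 0 ≤ ρ := by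
      rw [← hρdef]
      apply arcosh_nonneg
      have h1 : (0:ℝ) ≤ (r ^ 2 + (Y - Y') ^ 2) / (2 * Y * Y') :=
        div_nonneg (by positivity) (mul_nonneg (mul_nonneg (by norm_num) hY.le) hY'.le)
      linarith
    have hvert : |Real.log (Y / Y')| ≤ ρ := by
      rw [← hρdef]; exact hyp_lower_vert hr0 hY hY'
    have key : (Dn:ℝ) * l2 ≤ ρ + 10 * Λ := by
      by_cases hks : s ≤ max m n
      · have hDle2 : (Dn:ℝ) ≤ |(m:ℝ) - n| + 1 := by
          rcases le_total m n with hmn | hmn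
          · have hD : Dn ≤ (n - m) + 1 := by omega
            have hcast : (Dn:ℝ) ≤ ((n:ℝ) - m) + 1 := by
              have := (Nat.cast_le (α := ℝ)).mpr hD
              rw [Nat.cast_add, Nat.cast_sub hmn] at this
              simpa using this
            have habs : (n:ℝ) - m ≤ |(m:ℝ) - n| := by
              rw [abs_sub_comm]; exact le_abs_self _
            linarith
          · have hD : Dn ≤ (m - n) + 1 := by omega
            have hcast : (Dn:ℝ) ≤ ((m:ℝ) - n) + 1 := by
              have := (Nat.cast_le (α := ℝ)).mpr hD
              rw [Nat.cast_add, Nat.cast_sub hmn] at this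
              simpa using this
            linarith [le_abs_self ((m:ℝ) - n)]
        have e1 : (Dn:ℝ) * l2 ≤ (|(m:ℝ) - n| + 1) * l2 :=
          mul_le_mul_of_nonneg_right hDle2 hlog2pos.le
        linarith only [e1, F1b, hvert, hΛL, hΛ2, hΛpos.le]
      · push_neg at hks
        have hs1 : 1 ≤ s := by omega
        have hδ2 : 2 ≤ δn := by
          by_contra hcon
          push_neg at hcon
          have : Nat.clog 2 δn = 0 := Nat.clog_of_right_le_one (by omega) 2
          omega
        have hδpos : (0:ℝ) < (δn:ℝ) := by exact_mod_cast Nat.lt_of_lt_of_le (by norm_num) hδ2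
        have hδ1 : (1:ℝ) ≤ (δn:ℝ) := by exact_mod_cast (by omega : 1 ≤ δn)
        have hpow : 2 ^ (s - 1) < δn := by
          rw [← hsdef]; exact Nat.pow_pred_clog_lt_self (by norm_num) (by omega)
        have hslog : (s:ℝ) * l2 ≤ Real.log (δn:ℝ) + l2 := by
          have h1 : ((2:ℝ)) ^ (s - 1 : ℕ) ≤ (δn:ℝ) := by exact_mod_cast hpow.le
          have h2 : Real.log ((2:ℝ) ^ (s - 1 : ℕ)) ≤ Real.log (δn:ℝ) :=
            Real.log_le_log (by positivity) h1
          rw [Real.log_pow, hl2def] at h2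
          have h3 : (((s : ℕ) - 1 : ℕ) : ℝ) = (s:ℝ) - 1 := by
            rw [Nat.cast_sub hs1]; simp
          rw [h3] at h2
          linarith
        have hDs : (Dn:ℝ) ≤ 2 * (s:ℝ) - m - n + 1 := by
          have hD : Dn ≤ (s - m) + (s - n) + 1 := by omega
          have hmrs : m ≤ s := by omega
          have hnrs : n ≤ s := by omega
          have hcast := (Nat.cast_le (α := ℝ)).mpr hD
          rw [Nat.cast_add, Nat.cast_add, Nat.cast_sub hmrs, Nat.cast_sub hnrs] at hcast
          push_cast at hcast ⊢
          linarith
        have e1 : (Dn:ℝ) * l2 ≤ (2 * (s:ℝ) - m - n + 1) * l2 :=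
          mul_le_mul_of_nonneg_right hDs hlog2pos.le
        have esl2 : ((2 * (s:ℝ) - m - n + 1) * l2)
            = 2 * ((s:ℝ) * l2) - (m:ℝ) * l2 - (n:ℝ) * l2 + l2 := by ring
        rw [esl2] at e1
        rcases le_or_gt 1 r with hr1 | hr1
        · have hρh : 2 * Real.log r - Real.log (2 * Y * Y') ≤ ρ := by
            rw [← hρdef]; exact hyp_lower_horiz (by linarith) hY hY'
          have hlog2YY : Real.log (2 * Y * Y')
              ≤ l2 + 2 * Real.log L + (m:ℝ) * l2 + (n:ℝ) * l2 := by
            rw [show (2:ℝ) * Y * Y' = 2 * (Y * Y') by ring,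
              Real.log_mul (by norm_num) (by positivity),
              Real.log_mul (ne_of_gt hY) (ne_of_gt hY'), hlogY, hlogY', hl2def]
            linarith [hlym.2, hlyn.2]
          have hlogδr : Real.log (δn:ℝ) ≤ 2 * Λ + Real.log r := by
            have e3 : (0:ℝ) ≤ lam * c * (r - 1) :=
              mul_nonneg (mul_nonneg (by linarith) hc) (by linarith)
            have h1 : (δn:ℝ) ≤ lam * (1 + c) * r := by linarith only [hδlam, e3]
            calc Real.log (δn:ℝ) ≤ Real.log (lam * (1 + c) * r) :=
                Real.log_le_log hδpos h1
              _ = Real.log lam + Real.log (1 + c) + Real.log r := by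
                rw [Real.log_mul (by positivity) (by linarith),
                  Real.log_mul (by positivity) (by positivity)]
              _ ≤ 2 * Λ + Real.log r := by linarith only [hΛlam, hΛc]
          linarith only [e1, hslog, hlogδr, hρh, hlog2YY, hΛ2, hΛL, hLnn, hΛpos.le]
        · have hlogδ' : Real.log (δn:ℝ) ≤ 2 * Λ := by
            have e3 : (0:ℝ) ≤ lam * (1 - r) :=
              mul_nonneg (by linarith) (by linarith)
            have h1 : (δn:ℝ) ≤ lam * (1 + c) := by linarith only [hδlam, e3]
            calc Real.log (δn:ℝ) ≤ Real.log (lam * (1 + c)) := Real.log_le_log hδpos h1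
              _ = Real.log lam + Real.log (1 + c) :=
                Real.log_mul (by positivity) (by positivity)
              _ ≤ 2 * Λ := by linarith only [hΛlam, hΛc]
          linarith only [e1, hslog, hlogδ', hρ0, hΛ2, hΛpos.le, hml2nn, hnl2nn]
    have h7 : (1/7 : ℝ) * (Dn:ℝ) ≤ (Dn:ℝ) * l2 := by
      have h8 := mul_le_mul_of_nonneg_left hlog2ge hDnn
      linarith only [h8]
    linarith only [key, h7]
  · -- UPPER bound
    by_cases hab : a = b
    · have hδ0 : (δn:ℝ) = 0 := by
        rw [← hδn, hab]; simp
      have hmax : max 0 (2 * Real.log (1 + r) - Real.log (Y * Y')) ≤ 2 * Λ := by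
        apply max_le (by linarith only [hΛpos.le])
        rw [hδ0] at h1r
        simp only [add_zero, Real.log_one] at h1r
        have hYYnn : 0 ≤ Real.log (Y * Y') := Real.log_nonneg hYY1
        linarith only [h1r, hYYnn]
      linarith only [hupper, F1a, habs2, hDl2, hmax, hΛ2, hΛL, hΛpos.le, hDnn]
    · have hδpos1 : 1 ≤ δn := by rw [← hδn]; exact hG.pos_dist_of_ne hab
      have hDpos : 1 ≤ Dn := by
        rcases Nat.eq_zero_or_pos Dn with h0 | h
        · exfalso
          have h00 : (Horoball G).dist (a, m) (b, n) = 0 := by rw [hDn, h0]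
          rcases SimpleGraph.dist_eq_zero_iff_eq_or_not_reachable.mp h00 with heq | hnr
          · exact hab (congrArg Prod.fst heq)
          · exact hnr hreach
        · exact h
      have hδr : (1:ℝ) ≤ (δn:ℝ) := by exact_mod_cast hδpos1
      have hDr : (1:ℝ) ≤ (Dn:ℝ) := by exact_mod_cast hDpos
      have hW2r : (δn:ℝ) ≤ (Dn:ℝ) * 2 ^ m * 2 ^ Dn := by
        have := (Nat.cast_le (α := ℝ)).mpr hW2
        push_cast at this
        linarith
      have hlogδ : Real.log (δn:ℝ) ≤ (Dn:ℝ) * l2 + (m:ℝ) * l2 + (Dn:ℝ) * l2 := by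
        have h1 : Real.log (δn:ℝ) ≤ Real.log ((Dn:ℝ) * 2 ^ m * 2 ^ Dn) :=
          Real.log_le_log (by linarith) hW2r
        rw [Real.log_mul (by positivity) (by positivity),
          Real.log_mul (by linarith) (by positivity), Real.log_pow, Real.log_pow,
          hl2def] at h1
        have h2 : Real.log (Dn:ℝ) ≤ (Dn:ℝ) * l2 := by
          have h3 : (Dn:ℝ) ≤ (2:ℝ) ^ Dn := by
            exact_mod_cast Dn.lt_two_pow_self.le
          calc Real.log (Dn:ℝ) ≤ Real.log ((2:ℝ) ^ Dn) :=
              Real.log_le_log (by linarith) h3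
            _ = (Dn:ℝ) * l2 := by rw [Real.log_pow, hl2def]
        linarith
      have hlog1δ : Real.log (1 + (δn:ℝ)) ≤ l2 + Real.log (δn:ℝ) := by
        have h1 : 1 + (δn:ℝ) ≤ 2 * (δn:ℝ) := by linarith
        calc Real.log (1 + (δn:ℝ)) ≤ Real.log (2 * (δn:ℝ)) :=
            Real.log_le_log (by linarith) h1
          _ = l2 + Real.log (δn:ℝ) := by
            rw [Real.log_mul (by norm_num) (by linarith), hl2def]
      have hmn1 : ((m:ℝ) - n) * l2 ≤ (Dn:ℝ) * l2 :=
        mul_le_mul_of_nonneg_right (le_trans (le_abs_self _) hmnD) hlog2pos.le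
      have hmn1' : (m:ℝ) * l2 - (n:ℝ) * l2 ≤ (Dn:ℝ) * l2 := by
        have : ((m:ℝ) - n) * l2 = (m:ℝ) * l2 - (n:ℝ) * l2 := by ring
        linarith [hmn1]
      have hmax : max 0 (2 * Real.log (1 + r) - Real.log (Y * Y'))
          ≤ 2 * Λ + 2 * l2 + 5 * ((Dn:ℝ) * l2) := by
        apply max_le (by linarith only [hΛpos.le, hlog2pos.le, hDl2nn])
        linarith only [h1r, hlog1δ, hlogδ, hlogYY, hmn1']
      linarith only [hupper, F1a, habs2, hDl2, hmax, hΛ2, hΛL, hΛpos.le, hDnn]
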